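/- For every integer q ≥ 1 and ε ∈ ℝ, the Q-flow vector field v(x, y, z) = (∂ψ_q/∂y + ε·sin z, −∂ψ_q/∂x + ε·cos z, ψ_q(x, y)) is equivariant under the screw motion combining the rotation by θ = 2π/q about the z-axis with the shift z ↦ z − θ: if R denotes rotation of ℝ² by θ and Φ(x, y, z) = (R(x, y), z − θ), then for every point p ∈ ℝ³, v(Φ(p)) = (R(v₁(p), v₂(p)), v₃(p)) = DΦ(p)·v(p); that is, Φ maps orbits of the Q-flow to orbits. -/

import Mathlib

/-- The stream function of Zaslavsky's Q-flow:
`ψ_q(x, y) = Σ_{j=1}^{q} cos(x cos(2πj/q) + y sin(2πj/q))`. -/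
noncomputable def psi (q : ℕ) (x y : ℝ) : ℝ :=
  ∑ j ∈ Finset.Icc 1 q,
    Real.cos (x * Real.cos (2 * Real.pi * j / q) + y * Real.sin (2 * Real.pi * j / q))

open Real Finset

/-- Reindexing lemma: summing a function of `(cos(2πj/q), sin(2πj/q))` over `j = 1..q`
is invariant under shifting the angle by `2π/q`, by periodicity. -/
lemma qflow_sum_shift (q : ℕ) (hq : 1 ≤ q) (f : ℝ → ℝ → ℝ) :
    ∑ j ∈ Finset.Icc 1 q,
        f (Real.cos (2 * Real.pi * j / q - 2 * Real.pi / q))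
          (Real.sin (2 * Real.pi * j / q - 2 * Real.pi / q))
      = ∑ j ∈ Finset.Icc 1 q,
        f (Real.cos (2 * Real.pi * j / q)) (Real.sin (2 * Real.pi * j / q)) := by
  set g : ℕ → ℝ := fun j => f (Real.cos (2 * Real.pi * j / q)) (Real.sin (2 * Real.pi * j / q))
    with hg
  have hq0 : (q : ℝ) ≠ 0 := Nat.cast_ne_zero.mpr (by omega)
  have hL : ∀ j ∈ Finset.Icc 1 q,
      f (Real.cos (2 * Real.pi * j / q - 2 * Real.pi / q))
        (Real.sin (2 * Real.pi * j / q - 2 * Real.pi / q)) = g (j - 1) := by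
    intro j hj
    have h1 : 1 ≤ j := (Finset.mem_Icc.mp hj).1
    have harg : 2 * Real.pi * j / q - 2 * Real.pi / q = 2 * Real.pi * ((j - 1 : ℕ) : ℝ) / q := by
      push_cast [Nat.cast_sub h1]
      ring
    rw [harg]
  rw [Finset.sum_congr rfl hL, ← Finset.Ico_add_one_right_eq_Icc, Finset.sum_Ico_eq_sum_range,
    Finset.sum_Ico_eq_sum_range]
  have hgq : g q = g 0 := by
    have : 2 * Real.pi * (q : ℝ) / q = 2 * Real.pi := by field_simp
    simp [hg, this, Real.cos_two_pi, Real.sin_two_pi]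
  have h1 : ∀ k, 1 + k - 1 = k := fun k => by omega
  simp only [Nat.succ_sub_one, Nat.add_sub_cancel, h1]
  show ∑ x ∈ Finset.range q, g x = ∑ k ∈ Finset.range q, g (1 + k)
  have h2 : ∑ k ∈ Finset.range q, g (1 + k) = ∑ k ∈ Finset.range q, g (k + 1) := by
    exact Finset.sum_congr rfl fun k _ => by rw [Nat.add_comm]
  rw [h2]
  have h3 := Finset.sum_range_succ' g q
  have h4 := Finset.sum_range_succ g q
  have : ∑ k ∈ Finset.range q, g (k + 1) + g 0 = ∑ k ∈ Finset.range q, g k + g q := by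
    rw [← h3, h4]
  rw [hgq] at this
  linarith

lemma qflow_deriv_y (q : ℕ) (x y : ℝ) :
    deriv (fun s => psi q x s) y
      = ∑ j ∈ Finset.Icc 1 q,
          -(Real.sin (x * Real.cos (2 * Real.pi * j / q) + y * Real.sin (2 * Real.pi * j / q))
              * Real.sin (2 * Real.pi * j / q)) := by
  have h : HasDerivAt (fun s => psi q x s)
      (∑ j ∈ Finset.Icc 1 q,
        -(Real.sin (x * Real.cos (2 * Real.pi * j / q) + y * Real.sin (2 * Real.pi * j / q))
            * Real.sin (2 * Real.pi * j / q))) y := by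
    unfold psi
    apply HasDerivAt.fun_sum
    intro j _
    have h1 : HasDerivAt
        (fun s : ℝ => x * Real.cos (2 * Real.pi * j / q) + s * Real.sin (2 * Real.pi * j / q))
        (Real.sin (2 * Real.pi * j / q)) y := by
      simpa using ((hasDerivAt_id y).mul_const (Real.sin (2 * Real.pi * j / q))).const_add
        (x * Real.cos (2 * Real.pi * j / q))
    simpa [neg_mul] using h1.cos
  exact h.deriv

lemma qflow_deriv_x (q : ℕ) (x y : ℝ) :
    deriv (fun s => psi q s y) x
      = ∑ j ∈ Finset.Icc 1 q,
          -(Real.sin (x * Real.cos (2 * Real.pi * j / q) + y * Real.sin (2 * Real.pi * j / q))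
              * Real.cos (2 * Real.pi * j / q)) := by
  have h : HasDerivAt (fun s => psi q s y)
      (∑ j ∈ Finset.Icc 1 q,
        -(Real.sin (x * Real.cos (2 * Real.pi * j / q) + y * Real.sin (2 * Real.pi * j / q))
            * Real.cos (2 * Real.pi * j / q))) x := by
    unfold psi
    apply HasDerivAt.fun_sum
    intro j _
    have h1 : HasDerivAt
        (fun s : ℝ => s * Real.cos (2 * Real.pi * j / q) + y * Real.sin (2 * Real.pi * j / q))
        (Real.cos (2 * Real.pi * j / q)) x := by
      simpa using ((hasDerivAt_id x).mul_const (Real.cos (2 * Real.pi * j / q))).add_const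
        (y * Real.sin (2 * Real.pi * j / q))
    simpa [neg_mul] using h1.cos
  exact h.deriv

section main
variable (q : ℕ)

lemma qflow_third (hq : 1 ≤ q) (x y : ℝ) :
    psi q (x * Real.cos (2 * Real.pi / q) - y * Real.sin (2 * Real.pi / q))
      (x * Real.sin (2 * Real.pi / q) + y * Real.cos (2 * Real.pi / q)) = psi q x y := by
  unfold psi
  rw [← qflow_sum_shift q hq (fun c s => Real.cos (x * c + y * s))]
  apply Finset.sum_congr rfl
  intro j _
  congr 1
  rw [Real.cos_sub, Real.sin_sub]
  ring

end main

lemma qflow_first (q : ℕ) (hq : 1 ≤ q) (ε x y z : ℝ) :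
    deriv (fun s => psi q (x * Real.cos (2 * Real.pi / q) - y * Real.sin (2 * Real.pi / q)) s)
        (x * Real.sin (2 * Real.pi / q) + y * Real.cos (2 * Real.pi / q))
      + ε * Real.sin (z - 2 * Real.pi / q)
    = (deriv (fun s => psi q x s) y + ε * Real.sin z) * Real.cos (2 * Real.pi / q)
      - (-(deriv (fun s => psi q s y) x) + ε * Real.cos z) * Real.sin (2 * Real.pi / q) := by
  set θ := 2 * Real.pi / q with hθ
  rw [qflow_deriv_y, qflow_deriv_y, qflow_deriv_x, Real.sin_sub]
  have key : ∑ j ∈ Finset.Icc 1 q,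
        -(Real.sin ((x * Real.cos θ - y * Real.sin θ) * Real.cos (2 * Real.pi * j / q)
            + (x * Real.sin θ + y * Real.cos θ) * Real.sin (2 * Real.pi * j / q))
          * Real.sin (2 * Real.pi * j / q))
      = ∑ j ∈ Finset.Icc 1 q,
        -(Real.sin (x * Real.cos (2 * Real.pi * j / q) + y * Real.sin (2 * Real.pi * j / q))
          * (Real.sin (2 * Real.pi * j / q) * Real.cos θ
             + Real.cos (2 * Real.pi * j / q) * Real.sin θ)) := by
    rw [← qflow_sum_shift q hq
      (fun c s => -(Real.sin (x * c + y * s) * (s * Real.cos θ + c * Real.sin θ)))]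
    apply Finset.sum_congr rfl
    intro j _
    have h1 : 2 * Real.pi * j / q - θ + θ = 2 * Real.pi * j / q := by ring
    have e1 : (x * Real.cos θ - y * Real.sin θ) * Real.cos (2 * Real.pi * j / q)
        + (x * Real.sin θ + y * Real.cos θ) * Real.sin (2 * Real.pi * j / q)
        = x * Real.cos (2 * Real.pi * j / q - θ) + y * Real.sin (2 * Real.pi * j / q - θ) := by
      rw [Real.cos_sub, Real.sin_sub]; ring
    have e2 : Real.sin (2 * Real.pi * j / q - θ) * Real.cos θ
        + Real.cos (2 * Real.pi * j / q - θ) * Real.sin θ = Real.sin (2 * Real.pi * j / q) := by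
      rw [← Real.sin_add, h1]
    rw [e1, ← e2]
  rw [key]
  have expand : ∑ j ∈ Finset.Icc 1 q,
        -(Real.sin (x * Real.cos (2 * Real.pi * j / q) + y * Real.sin (2 * Real.pi * j / q))
          * (Real.sin (2 * Real.pi * j / q) * Real.cos θ
             + Real.cos (2 * Real.pi * j / q) * Real.sin θ))
      = (∑ j ∈ Finset.Icc 1 q,
          -(Real.sin (x * Real.cos (2 * Real.pi * j / q) + y * Real.sin (2 * Real.pi * j / q))
            * Real.sin (2 * Real.pi * j / q))) * Real.cos θ
        + (∑ j ∈ Finset.Icc 1 q,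
          -(Real.sin (x * Real.cos (2 * Real.pi * j / q) + y * Real.sin (2 * Real.pi * j / q))
            * Real.cos (2 * Real.pi * j / q))) * Real.sin θ := by
    rw [Finset.sum_mul, Finset.sum_mul, ← Finset.sum_add_distrib]
    apply Finset.sum_congr rfl
    intro j _
    ring
  rw [expand]
  ring

lemma qflow_second (q : ℕ) (hq : 1 ≤ q) (ε x y z : ℝ) :
    -(deriv (fun s => psi q s (x * Real.sin (2 * Real.pi / q) + y * Real.cos (2 * Real.pi / q)))
        (x * Real.cos (2 * Real.pi / q) - y * Real.sin (2 * Real.pi / q)))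
      + ε * Real.cos (z - 2 * Real.pi / q)
    = (deriv (fun s => psi q x s) y + ε * Real.sin z) * Real.sin (2 * Real.pi / q)
      + (-(deriv (fun s => psi q s y) x) + ε * Real.cos z) * Real.cos (2 * Real.pi / q) := by
  set θ := 2 * Real.pi / q with hθ
  rw [qflow_deriv_x, qflow_deriv_y, qflow_deriv_x, Real.cos_sub]
  have key : ∑ j ∈ Finset.Icc 1 q,
        -(Real.sin ((x * Real.cos θ - y * Real.sin θ) * Real.cos (2 * Real.pi * j / q)
            + (x * Real.sin θ + y * Real.cos θ) * Real.sin (2 * Real.pi * j / q))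
          * Real.cos (2 * Real.pi * j / q))
      = ∑ j ∈ Finset.Icc 1 q,
        -(Real.sin (x * Real.cos (2 * Real.pi * j / q) + y * Real.sin (2 * Real.pi * j / q))
          * (Real.cos (2 * Real.pi * j / q) * Real.cos θ
             - Real.sin (2 * Real.pi * j / q) * Real.sin θ)) := by
    rw [← qflow_sum_shift q hq
      (fun c s => -(Real.sin (x * c + y * s) * (c * Real.cos θ - s * Real.sin θ)))]
    apply Finset.sum_congr rfl
    intro j _
    have h1 : 2 * Real.pi * j / q - θ + θ = 2 * Real.pi * j / q := by ring
    have e1 : (x * Real.cos θ - y * Real.sin θ) * Real.cos (2 * Real.pi * j / q)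
        + (x * Real.sin θ + y * Real.cos θ) * Real.sin (2 * Real.pi * j / q)
        = x * Real.cos (2 * Real.pi * j / q - θ) + y * Real.sin (2 * Real.pi * j / q - θ) := by
      rw [Real.cos_sub, Real.sin_sub]; ring
    have e2 : Real.cos (2 * Real.pi * j / q - θ) * Real.cos θ
        - Real.sin (2 * Real.pi * j / q - θ) * Real.sin θ = Real.cos (2 * Real.pi * j / q) := by
      rw [← Real.cos_add, h1]
    rw [e1, ← e2]
  rw [key]
  have expand : ∑ j ∈ Finset.Icc 1 q,
        -(Real.sin (x * Real.cos (2 * Real.pi * j / q) + y * Real.sin (2 * Real.pi * j / q))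
          * (Real.cos (2 * Real.pi * j / q) * Real.cos θ
             - Real.sin (2 * Real.pi * j / q) * Real.sin θ))
      = (∑ j ∈ Finset.Icc 1 q,
          -(Real.sin (x * Real.cos (2 * Real.pi * j / q) + y * Real.sin (2 * Real.pi * j / q))
            * Real.cos (2 * Real.pi * j / q))) * Real.cos θ
        - (∑ j ∈ Finset.Icc 1 q,
          -(Real.sin (x * Real.cos (2 * Real.pi * j / q) + y * Real.sin (2 * Real.pi * j / q))
            * Real.sin (2 * Real.pi * j / q))) * Real.sin θ := by
    rw [Finset.sum_mul, Finset.sum_mul, ← Finset.sum_sub_distrib]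
    apply Finset.sum_congr rfl
    intro j _
    ring
  rw [expand]
  ring

/-- For every integer `q ≥ 1` and `ε ∈ ℝ`, the Q-flow vector field
`v(x, y, z) = (∂ψ_q/∂y + ε sin z, −∂ψ_q/∂x + ε cos z, ψ_q)` is equivariant under the
screw motion `Φ(x, y, z) = (R(x, y), z − θ)`, where `θ = 2π/q` and `R` is the rotation
of `ℝ²` by `θ`: at every point, `v(Φ(p)) = (R(v₁(p), v₂(p)), v₃(p)) = DΦ(p)·v(p)`,
stated componentwise. -/
theorem stmt14 (q : ℕ) (hq : 1 ≤ q) (ε : ℝ) (x y z : ℝ) :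
    let θ := 2 * Real.pi / q
    let x' := x * Real.cos θ - y * Real.sin θ
    let y' := x * Real.sin θ + y * Real.cos θ
    let v1 := deriv (fun s => psi q x s) y + ε * Real.sin z
    let v2 := -(deriv (fun s => psi q s y) x) + ε * Real.cos z
    -- first component of v ∘ Φ equals first component of R(v₁, v₂)
    (deriv (fun s => psi q x' s) y' + ε * Real.sin (z - θ)
        = v1 * Real.cos θ - v2 * Real.sin θ) ∧
    -- second component of v ∘ Φ equals second component of R(v₁, v₂)
    (-(deriv (fun s => psi q s y') x') + ε * Real.cos (z - θ)
        = v1 * Real.sin θ + v2 * Real.cos θ) ∧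
    -- third component is invariant
    psi q x' y' = psi q x y := by
  exact ⟨qflow_first q hq ε x y z, qflow_second q hq ε x y z, qflow_third q hq x y⟩
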